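/- Let A be a unital k-algebra, g ∈ A, let · : A ⊗ R → R be a linear map, w ∈ R, and let q ∈ k be a primitive M-th root of unity (M ≥ 1). For j ∈ ℕ₀, a ∈ A, r ∈ R define D_j(a,r) := Σ_{k=0}^{j} (−1)^k · q^{−k(k−1)/2} · binom(j,k)_{q⁻¹} · w^{j−k} · ((g^k a)·r) · w^k. Then: (ii) if 1_A·1_R = 1_R, then D_M(1_A, 1_R) = (1_R − (g^M·1_R))·w^M; and (iii) if g^M = 1_A and w^M ∈ Z(R), then D_j(a,r) = 0 for all j ≥ M, a ∈ A and r ∈ R. -/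

import Mathlib

open TensorProduct

noncomputable section

/-- Gaussian ($q$-)binomial coefficients, defined by the recursion
`binom(0,0)_q = 1`, `binom(n,m)_q = 0` for `m > n`,
`binom(n,m)_q = binom(n-1,m)_q + q^(n-m) * binom(n-1,m-1)_q`. -/
def qbinom {K : Type*} [CommRing K] (q : K) : ℕ → ℕ → K
  | 0, 0 => 1
  | 0, _ + 1 => 0
  | n + 1, 0 => qbinom q n 0
  | n + 1, m + 1 => qbinom q n (m + 1) + q ^ (n - m) * qbinom q n m

/-- A (left) partial action of a bialgebra `H` on an algebra `R`:
(PA.1) `1 · r = r`; (PA.2) `h · (r*s) = Σ (h₁ · r)(h₂ · s)`;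
(PA.3) `h · (m · r) = Σ (h₁ · 1)(h₂m · r)`. -/
structure PartialAction (k H R : Type*) [CommSemiring k] [Semiring H] [Bialgebra k H]
    [Semiring R] [Algebra k R] where
  act : H →ₗ[k] R →ₗ[k] R
  unit_act : ∀ r : R, act 1 r = r
  mul_act : ∀ (h : H) (r s : R),
    act h (r * s) = TensorProduct.lift
      ((LinearMap.mul k R).compl₁₂ (act.flip r) (act.flip s)) (Coalgebra.comul (R := k) h)
  act_act : ∀ (h m : H) (r : R),
    act h (act m r) = TensorProduct.lift
      ((LinearMap.mul k R).compl₁₂ (act.flip 1)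
        ((act.flip r).comp (LinearMap.mulRight k m))) (Coalgebra.comul (R := k) h)

/-- Symmetry (PA.S): `h · (m · r) = Σ (h₁m · r)(h₂ · 1)`. -/
def PartialAction.IsSymmetric {k H R : Type*} [CommSemiring k] [Semiring H] [Bialgebra k H]
    [Semiring R] [Algebra k R] (P : PartialAction k H R) : Prop :=
  ∀ (h m : H) (r : R),
    P.act h (P.act m r) = TensorProduct.lift
      ((LinearMap.mul k R).compl₁₂ ((P.act.flip r).comp (LinearMap.mulRight k m))
        (P.act.flip 1)) (Coalgebra.comul (R := k) h)

/-- A grouplike element: `Δ g = g ⊗ g` and `ε g = 1`. -/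
def IsGrouplike (k : Type*) {H : Type*} [CommSemiring k] [Semiring H] [Bialgebra k H]
    (g : H) : Prop :=
  Coalgebra.comul (R := k) g = g ⊗ₜ[k] g ∧ Coalgebra.counit (R := k) g = 1

/-- A `(1,g)`-primitive element: `Δ x = x ⊗ 1 + g ⊗ x`. -/
def IsOneGPrimitive (k : Type*) {H : Type*} [CommSemiring k] [Semiring H] [Bialgebra k H]
    (g x : H) : Prop :=
  Coalgebra.comul (R := k) x = x ⊗ₜ[k] (1 : H) + g ⊗ₜ[k] x

end

/-- The expression `D_j(a,r) = Σ_{i=0}^{j} (-1)^i q^{-i(i-1)/2} binom(j,i)_{q⁻¹}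
w^{j-i} ((gⁱa) · r) wⁱ`. -/
def Dfun {k A R : Type*} [Field k] [Ring A] [Algebra k A] [Ring R] [Algebra k R]
    (act : A →ₗ[k] R →ₗ[k] R) (g : A) (w : R) (q : k) (j : ℕ) (a : A) (r : R) : R :=
  ∑ i ∈ Finset.range (j + 1),
    ((-1 : k) ^ i * q⁻¹ ^ (i * (i - 1) / 2) * qbinom q⁻¹ j i) •
      (w ^ (j - i) * act (g ^ i * a) r * w ^ i)

section prim
variable {K : Type*} [Field K] {p : K} {M : ℕ}

lemma qbinom_zero_right (q : K) : ∀ n, qbinom q n 0 = 1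
  | 0 => rfl
  | n + 1 => qbinom_zero_right q n

lemma qbinom_of_lt (q : K) : ∀ n m, n < m → qbinom q n m = 0
  | 0, _ + 1, _ => rfl
  | n + 1, m + 1, h => by
      show qbinom q n (m + 1) + q ^ (n - m) * qbinom q n m = 0
      rw [qbinom_of_lt q n (m+1) (by omega), qbinom_of_lt q n m (by omega)]; ring

lemma qbinom_self (q : K) : ∀ n, qbinom q n n = 1
  | 0 => rfl
  | n + 1 => by
      show qbinom q n (n + 1) + q ^ (n - n) * qbinom q n n = 1
      rw [qbinom_of_lt q n (n+1) (by omega), qbinom_self q n]; simp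

def qnat (q : K) (n : ℕ) : K := ∑ i ∈ Finset.range n, q ^ i

def qfact (q : K) : ℕ → K
  | 0 => 1
  | n + 1 => qfact q n * qnat q (n + 1)

lemma qnat_add (q : K) (a b : ℕ) : qnat q (a + b) = qnat q a + q ^ a * qnat q b := by
  unfold qnat
  rw [Finset.sum_range_add, Finset.mul_sum]
  congr 1
  exact Finset.sum_congr rfl fun i _ => by rw [pow_add]

lemma qbinom_mul_qfact (q : K) : ∀ n m, m ≤ n →
    qbinom q n m * (qfact q m * qfact q (n - m)) = qfact q n := by
  intro n
  induction n with
  | zero => intro m hm; interval_cases m; simp [qbinom, qfact]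
  | succ n ih =>
    intro m hm
    match m with
    | 0 =>
      show qbinom q (n+1) 0 * (qfact q 0 * qfact q (n+1)) = qfact q (n+1)
      rw [qbinom_zero_right]; simp [qfact]
    | m + 1 =>
      rcases Nat.lt_or_ge m n with h | h
      · have h1 : m + 1 ≤ n := h
        have e1 : n - m = (n - m - 1) + 1 := by omega
        have e2 : n - (m + 1) = n - m - 1 := by omega
        set s := n - m - 1 with hs
        have ih1 := ih (m + 1) h1
        have ih2 := ih m (by omega)
        rw [e2] at ih1
        rw [e1] at ih2
        have hqn : qnat q (n + 1) = qnat q (s + 1) + q ^ (s + 1) * qnat q (m + 1) := by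
          have : n + 1 = (s + 1) + (m + 1) := by omega
          rw [this, qnat_add]
        show (qbinom q n (m+1) + q ^ (n - m) * qbinom q n m) *
            (qfact q (m+1) * qfact q (n + 1 - (m+1))) = qfact q (n+1)
        have e3 : n + 1 - (m + 1) = s + 1 := by omega
        rw [e3, e1]
        show (qbinom q n (m+1) + q ^ (s+1) * qbinom q n m) *
            ((qfact q m * qnat q (m+1)) * (qfact q s * qnat q (s+1))) =
            qfact q n * qnat q (n+1)
        rw [hqn]
        have ih2' : qbinom q n m * (qfact q m * (qfact q s * qnat q (s+1))) = qfact q n := by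
          rw [← ih2]; rfl
        have ih1' : qbinom q n (m+1) * ((qfact q m * qnat q (m+1)) * qfact q s) = qfact q n := by
          rw [← ih1]; rfl
        linear_combination qnat q (s+1) * ih1' + q^(s+1) * qnat q (m+1) * ih2'
      · have : m = n := by omega
        subst this
        rw [qbinom_self]; simp [qfact]

lemma qnat_ne_zero (hq : IsPrimitiveRoot p M) {i : ℕ} (h1 : 0 < i) (h2 : i < M) :
    qnat p i ≠ 0 := by
  have hM : 1 < M := lt_of_le_of_lt h1 h2
  intro h0
  have hg := geom_sum_mul p i
  unfold qnat at h0
  rw [h0, zero_mul] at hg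
  have : p ^ i = 1 := by linear_combination -hg
  exact hq.pow_ne_one_of_pos_of_lt h1.ne' h2 this

lemma qnat_M_eq_zero (hq : IsPrimitiveRoot p M) (hM : 1 < M) : qnat p M = 0 := by
  have hp1 : p ≠ 1 := hq.ne_one hM
  have hg := geom_sum_mul p M
  rw [hq.pow_eq_one, sub_self] at hg
  rcases mul_eq_zero.mp hg with h | h
  · exact h
  · exact absurd (by linear_combination h : p = 1) hp1

lemma qfact_ne_zero (hq : IsPrimitiveRoot p M) : ∀ i, i < M → qfact p i ≠ 0 := by
  intro i
  induction i with
  | zero => intro _; exact one_ne_zero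
  | succ n ih =>
    intro h
    show qfact p n * qnat p (n+1) ≠ 0
    exact mul_ne_zero (ih (by omega)) (qnat_ne_zero hq (Nat.succ_pos n) h)

lemma qbinom_prim_vanish (hq : IsPrimitiveRoot p M) {i : ℕ} (h1 : 0 < i) (h2 : i < M) :
    qbinom p M i = 0 := by
  have key := qbinom_mul_qfact p M i (le_of_lt h2)
  have hfM : qfact p M = 0 := by
    have hM : M = (M - 1) + 1 := by omega
    rw [hM]
    show qfact p (M-1) * qnat p ((M-1)+1) = 0
    rw [← hM, qnat_M_eq_zero hq (by omega), mul_zero]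
  rw [hfM] at key
  have f1 : qfact p i ≠ 0 := qfact_ne_zero hq i h2
  have f2 : qfact p (M - i) ≠ 0 := qfact_ne_zero hq _ (by omega)
  rcases mul_eq_zero.mp key with h | h
  · exact h
  · exact absurd h (mul_ne_zero f1 f2)

lemma prim_sign (hq : IsPrimitiveRoot p M) (hM : 1 ≤ M) :
    (-1 : K) ^ M * p ^ (M * (M - 1) / 2) = -1 := by
  rcases Nat.even_or_odd M with he | ho
  · obtain ⟨t, ht⟩ := he
    have ht2 : M = 2 * t := by omega
    have htpos : 0 < t := by omega
    have hdiv : M * (M - 1) / 2 = t * (M - 1) := by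
      rw [ht2, show 2 * t * (2 * t - 1) = t * (2 * t - 1) * 2 by ring,
        Nat.mul_div_cancel _ (by norm_num)]
    have hpt : p ^ t = -1 := by
      have h2 : (p ^ t) ^ 2 = 1 := by
        rw [← pow_mul, show t * 2 = M by omega]; exact hq.pow_eq_one
      have hne : p ^ t ≠ 1 := hq.pow_ne_one_of_pos_of_lt htpos.ne' (by omega)
      have hz : (p ^ t - 1) * (p ^ t + 1) = 0 := by linear_combination h2
      rcases mul_eq_zero.mp hz with h | h
      · exact absurd (by linear_combination h) hne
      · linear_combination h
    have hodd : Odd (M - 1) := ⟨t - 1, by omega⟩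
    rw [hdiv, pow_mul, hpt, Even.neg_one_pow ⟨t, ht⟩, one_mul, Odd.neg_one_pow hodd]
  · obtain ⟨t, ht⟩ := ho
    have hdiv : M * (M - 1) / 2 = M * t := by
      rw [show M - 1 = 2 * t by omega, show M * (2 * t) = M * t * 2 by ring,
        Nat.mul_div_cancel _ (by norm_num)]
    rw [hdiv, pow_mul, hq.pow_eq_one, one_pow, Odd.neg_one_pow ⟨t, by omega⟩, mul_one]

end prim

section D

variable {k A R : Type*} [Field k] [Ring A] [Algebra k A] [Ring R] [Algebra k R]
  (act : A →ₗ[k] R →ₗ[k] R) (g : A) (w : R) (q : k)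

lemma triangle_succ (i : ℕ) : (i + 1) * ((i + 1) - 1) / 2 = i * (i - 1) / 2 + i := by
  have h2 : Even (i * (i - 1)) := by
    rcases i with _ | t
    · simp
    · simpa [Nat.mul_comm] using Nat.even_mul_succ_self t
  obtain ⟨b, hb⟩ := h2
  have h3 : (i + 1) * ((i + 1) - 1) = i * (i - 1) + 2 * i := by
    rcases i with _ | t
    · rfl
    · simp only [Nat.succ_sub_one]; ring
  rw [h3, hb]
  omega

lemma Dfun_succ (j : ℕ) (a : A) (r : R) :
    Dfun act g w q (j + 1) a r
      = w * Dfun act g w q j a r - q⁻¹ ^ j • (Dfun act g w q j (g * a) r * w) := by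
  set p := q⁻¹ with hp
  have hCsucc : ∀ i : ℕ, i ≤ j →
      ((-1:k)^(i+1) * p^((i+1)*((i+1)-1)/2) * qbinom p (j+1) (i+1))
        = ((-1:k)^(i+1) * p^((i+1)*((i+1)-1)/2) * qbinom p j (i+1))
          - p^j * ((-1:k)^i * p^(i*(i-1)/2) * qbinom p j i) := by
    intro i hij
    have hrec : qbinom p (j+1) (i+1) = qbinom p j (i+1) + p^(j-i) * qbinom p j i := rfl
    have hpe : p ^ ((i+1)*((i+1)-1)/2) * p ^ (j - i) = p ^ j * p ^ (i*(i-1)/2) := by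
      rw [← pow_add, ← pow_add, triangle_succ i]; congr 1; omega
    rw [hrec]
    have hsgn : (-1:k)^(i+1) = -(-1:k)^i := by rw [pow_succ]; ring
    linear_combination ((-1:k)^(i+1) * qbinom p j i) * hpe
  -- abbreviations
  set T : ℕ → R := fun i => w ^ (j + 1 - i) * act (g ^ i * a) r * w ^ i with hT
  have key : ∀ i : ℕ, i ≤ j →
      w * (w ^ (j - i) * act (g ^ i * a) r * w ^ i) = T i := by
    intro i hij
    simp only [hT]
    rw [show j + 1 - i = (j - i) + 1 by omega, pow_succ']
    simp only [mul_assoc]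
  have key2 : ∀ i : ℕ,
      (w ^ (j - i) * act (g ^ i * (g * a)) r * w ^ i) * w = T (i + 1) := by
    intro i
    simp only [hT]
    rw [show j + 1 - (i + 1) = j - i by omega,
      show g ^ i * (g * a) = g ^ (i + 1) * a by rw [pow_succ, mul_assoc],
      pow_succ w i, mul_assoc]
  unfold Dfun
  rw [Finset.sum_mul, Finset.smul_sum, Finset.mul_sum, ← Finset.sum_sub_distrib]
  rw [Finset.sum_range_succ' _ (j + 1)]
  have lhs_eq : ∀ i ∈ Finset.range (j + 1),
      ((-1:k)^(i+1) * p^((i+1)*((i+1)-1)/2) * qbinom p (j+1) (i+1)) • T (i+1)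
      = ((-1:k)^(i+1) * p^((i+1)*((i+1)-1)/2) * qbinom p j (i+1)) • T (i+1)
        - (p^j * ((-1:k)^i * p^(i*(i-1)/2) * qbinom p j i)) • T (i+1) := by
    intro i hi
    rw [hCsucc i (Finset.mem_range.mp hi |> Nat.lt_succ_iff.mp), sub_smul]
  have rhs_eq : ∀ i ∈ Finset.range (j + 1),
      (w * (((-1:k)^i * p^(i*(i-1)/2) * qbinom p j i) • (w ^ (j - i) * act (g ^ i * a) r * w ^ i))
        - p^j • ((((-1:k)^i * p^(i*(i-1)/2) * qbinom p j i) • (w ^ (j - i) * act (g ^ i * (g * a)) r * w ^ i)) * w))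
      = ((-1:k)^i * p^(i*(i-1)/2) * qbinom p j i) • T i
        - (p^j * ((-1:k)^i * p^(i*(i-1)/2) * qbinom p j i)) • T (i+1) := by
    intro i hi
    rw [mul_smul_comm, key i (Finset.mem_range.mp hi |> Nat.lt_succ_iff.mp),
      smul_mul_assoc, key2 i, smul_smul]
  rw [Finset.sum_congr rfl lhs_eq, Finset.sum_congr rfl rhs_eq,
    Finset.sum_sub_distrib, Finset.sum_sub_distrib]
  have last_zero : ((-1:k)^(j+1) * p^((j+1)*((j+1)-1)/2) * qbinom p j (j+1)) • T (j+1) = 0 := by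
    rw [qbinom_of_lt p j (j+1) (by omega)]; simp
  have split : ∑ i ∈ Finset.range (j + 1),
      ((-1:k)^i * p^(i*(i-1)/2) * qbinom p j i) • T i
      = ∑ i ∈ Finset.range (j + 1),
          ((-1:k)^(i+1) * p^((i+1)*((i+1)-1)/2) * qbinom p j (i+1)) • T (i+1)
        + ((-1:k)^0 * p^(0*(0-1)/2) * qbinom p j 0) • T 0 := by
    rw [Finset.sum_range_succ' _ j, Finset.sum_range_succ _ j, last_zero, add_zero]
  rw [split]
  have h0 : ((-1:k)^0 * p^(0*(0-1)/2) * qbinom p (j+1) 0) • T 0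
      = ((-1:k)^0 * p^(0*(0-1)/2) * qbinom p j 0) • T 0 := by
    rw [qbinom_zero_right, qbinom_zero_right]
  rw [h0]
  abel

end D

theorem stmt10' {k A R : Type*} [Field k]
    [Ring A] [Algebra k A] [Ring R] [Algebra k R]
    (act : A →ₗ[k] R →ₗ[k] R) (g : A) (w : R)
    (q : k) (M : ℕ) (hM : 1 ≤ M) (hq : IsPrimitiveRoot q M)
    (a : A) (r : R) :
    Dfun act g w q M a r = w ^ M * act a r - act (g ^ M * a) r * w ^ M := by
  have hp : IsPrimitiveRoot q⁻¹ M := hq.inv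
  unfold Dfun
  rw [Finset.sum_range_succ]
  rw [Finset.sum_eq_single_of_mem 0 (Finset.mem_range.mpr (by omega))
    (fun i hi hi0 => by
      rw [qbinom_prim_vanish hp (Nat.pos_of_ne_zero hi0) (Finset.mem_range.mp hi)]
      simp)]
  rw [qbinom_zero_right, qbinom_self, mul_one, prim_sign hp hM]
  simp only [pow_zero, one_mul, mul_one, Nat.sub_zero, Nat.sub_self, Nat.zero_mul,
    Nat.zero_div, one_smul, neg_one_smul, ← sub_eq_add_neg]


/-- Lemma 3.5(ii),(iii): if `q` is a primitive `M`-th root of unity then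
(ii) if `1_A · 1_R = 1_R` then `D_M(1,1) = (1 - (g^M · 1_R)) w^M`; and
(iii) if `g^M = 1` and `w^M ∈ Z(R)` then `D_j(a,r) = 0` for `j ≥ M`. -/
theorem stmt10 {k A R : Type*} [Field k] [IsAlgClosed k] [CharZero k]
    [Ring A] [Algebra k A] [Ring R] [Algebra k R]
    (act : A →ₗ[k] R →ₗ[k] R) (g : A) (w : R)
    (q : k) (M : ℕ) (hM : 1 ≤ M) (hq : IsPrimitiveRoot q M) :
    (act 1 1 = 1 → Dfun act g w q M 1 1 = (1 - act (g ^ M) 1) * w ^ M) ∧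
    (g ^ M = 1 → w ^ M ∈ Set.center R →
      ∀ j, M ≤ j → ∀ (a : A) (r : R), Dfun act g w q j a r = 0) := by
  constructor
  · intro h1
    rw [stmt10' act g w q M hM hq 1 1, h1]
    simp only [mul_one]
    rw [sub_mul, one_mul]
  · intro hg hw j hj
    induction j, hj using Nat.le_induction with
    | base =>
      intro a r
      rw [stmt10' act g w q M hM hq a r, hg, one_mul,
        Semigroup.mem_center_iff.mp hw (act a r)]
      exact sub_self _
    | succ n hn ih =>
      intro a r
      rw [Dfun_succ act g w q n a r, ih a r, ih (g * a) r]
      simp
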